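/- Let G be a connected, gap-free, C_5-free, diamond-free finite simple graph with clique number ω(G) = 3. Then either G is isomorphic to the complement of the 6-cycle, or the complement G^c is chordal. -/

import Mathlib

open SimpleGraph

/-- A graph is gap-free if no two disjoint edges induce a subgraph with exactly those two edges. -/
def IsGapFree {V : Type*} (G : SimpleGraph V) : Prop :=
  ¬ ∃ a b c d : V, a ≠ b ∧ a ≠ c ∧ a ≠ d ∧ b ≠ c ∧ b ≠ d ∧ c ≠ d ∧
    G.Adj a b ∧ G.Adj c d ∧ ¬G.Adj a c ∧ ¬G.Adj a d ∧ ¬G.Adj b c ∧ ¬G.Adj b d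

/-- A graph is diamond-free if it has no induced `K₄` minus an edge
(vertices `a b c d`, edges `ab, ac, bc, ad, cd`, non-edge `bd`). -/
def IsDiamondFree {V : Type*} (G : SimpleGraph V) : Prop :=
  ¬ ∃ a b c d : V, a ≠ b ∧ a ≠ c ∧ a ≠ d ∧ b ≠ c ∧ b ≠ d ∧ c ≠ d ∧
    G.Adj a b ∧ G.Adj a c ∧ G.Adj b c ∧ G.Adj a d ∧ G.Adj c d ∧ ¬G.Adj b d

/-- The clique number of a graph. -/
noncomputable def cliqueNum' {V : Type*} (G : SimpleGraph V) : ℕ :=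
  sSup {n | ∃ s : Finset V, G.IsNClique n s}

/-- The cycle graph on `Fin n` (for `n ≥ 3`). -/
def cycG (n : ℕ) : SimpleGraph (Fin n) :=
  SimpleGraph.fromRel (fun i j => (j : ℕ) = ((i : ℕ) + 1) % n)

/-- `G` has an induced cycle on `n` vertices. -/
def HasInducedCycle {V : Type*} (G : SimpleGraph V) (n : ℕ) : Prop :=
  ∃ f : Fin n → V, Function.Injective f ∧ ∀ i j, G.Adj (f i) (f j) ↔ (cycG n).Adj i j

/-- A graph is chordal if it has no induced cycle on `n ≥ 4` vertices. -/
def IsChordal {V : Type*} (G : SimpleGraph V) : Prop :=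
  ∀ n, 4 ≤ n → ¬ HasInducedCycle G n

/-- The graph obtained from `G` by multiplying the vertex `v` by the independent set `U`:
`v` is replaced by the vertices of `U`, each adjacent exactly to the neighbors of `v`,
with `U` independent and all other adjacencies as in `G`. -/
def VertexMul {V : Type*} (U : Type*) (G : SimpleGraph V) (v : V) :
    SimpleGraph ({x : V // x ≠ v} ⊕ U) :=
  SimpleGraph.fromRel (fun a b =>
    match a, b with
    | Sum.inl x, Sum.inl y => G.Adj x.1 y.1
    | Sum.inl x, Sum.inr _ => G.Adj x.1 v
    | Sum.inr _, Sum.inl y => G.Adj y.1 v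
    | Sum.inr _, Sum.inr _ => False)

/-! ### Auxiliary material -/

instance cycG.instDec {n : ℕ} : DecidableRel (cycG n).Adj := fun a b =>
  decidable_of_iff' _ (SimpleGraph.fromRel_adj _ a b)

/-- Adjacency pattern of the complement of `C₆` (the triangular prism), as a `Bool`. -/
def P6 (i j : Fin 6) : Bool := decide (i ≠ j ∧ ¬ (cycG 6).Adj i j)

set_option maxHeartbeats 4000000 in
set_option synthInstance.maxHeartbeats 2000000 in
set_option synthInstance.maxSize 2000 in
/-- Core combinatorial fact: any vertex `v` attached to the prism in any nonempty way yields
a `K₄`, a diamond, a `2K₂`, or an induced `C₅` (described by index patterns). -/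
lemma core6 : ∀ b : Fin 6 → Bool, (∃ i, b i = true) →
    (∃ i j k : Fin 6, b i = true ∧ b j = true ∧ b k = true ∧
      P6 i j = true ∧ P6 i k = true ∧ P6 j k = true) ∨
    (∃ i j k : Fin 6, b i = true ∧ b j = true ∧ b k = false ∧
      P6 i j = true ∧ P6 i k = true ∧ P6 j k = true) ∨
    (∃ i j k : Fin 6, b i = true ∧ b j = false ∧ b k = false ∧
      P6 j k = true ∧ P6 i j = false ∧ P6 i k = false) ∨
    (∃ i j k l : Fin 6, i ≠ l ∧ b i = true ∧ b l = true ∧ b j = false ∧ b k = false ∧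
      P6 i j = true ∧ P6 j k = true ∧ P6 k l = true ∧
      P6 i k = false ∧ P6 i l = false ∧ P6 j l = false) := by
  decide

lemma adj_iff_not_compl {V : Type*} (G : SimpleGraph V) {x y : V} (h : x ≠ y) :
    G.Adj x y ↔ ¬ Gᶜ.Adj x y := by
  rw [SimpleGraph.compl_adj]; tauto

lemma walk_cross {V : Type*} {G : SimpleGraph V} (S : Set V) :
    ∀ {x y : V}, G.Walk x y → x ∉ S → y ∈ S → ∃ v p, v ∉ S ∧ p ∈ S ∧ G.Adj v p := by
  intro x y w
  induction w with
  | nil => intro h1 h2; exact absurd h2 h1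
  | @cons a c y hadj p ih =>
    intro h1 h2
    by_cases hc : c ∈ S
    · exact ⟨a, c, h1, hc, hadj⟩
    · exact ih hc h2

lemma cliqueNum_noK4 {V : Type*} [Fintype V] (G : SimpleGraph V) (hw : cliqueNum' G = 3)
    {a b c d : V} (hab : G.Adj a b) (hac : G.Adj a c) (had : G.Adj a d)
    (hbc : G.Adj b c) (hbd : G.Adj b d) (hcd : G.Adj c d) : False := by
  classical
  have hclique : G.IsNClique 4 {a, b, c, d} := by
    constructor
    · intro x hx y hy hxy
      simp only [Finset.coe_insert, Set.mem_insert_iff, Finset.coe_singleton,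
        Set.mem_singleton_iff] at hx hy
      rcases hx with rfl | rfl | rfl | rfl <;> rcases hy with rfl | rfl | rfl | rfl <;>
        first
          | exact absurd rfl hxy
          | assumption
          | exact hab.symm
          | exact hac.symm
          | exact had.symm
          | exact hbc.symm
          | exact hbd.symm
          | exact hcd.symm
    · rw [Finset.card_insert_of_notMem (by simp [hab.ne, hac.ne, had.ne]),
        Finset.card_insert_of_notMem (by simp [hbc.ne, hbd.ne]),
        Finset.card_insert_of_notMem (by simp [hcd.ne]), Finset.card_singleton]
  have hbdd : BddAbove {n | ∃ s : Finset V, G.IsNClique n s} := by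
    refine ⟨Fintype.card V, fun n hn => ?_⟩
    obtain ⟨s, hs⟩ := hn
    exact hs.2 ▸ Finset.card_le_univ s
  have h4 : (4 : ℕ) ≤ cliqueNum' G := le_csSup hbdd ⟨_, hclique⟩
  rw [hw] at h4
  omega

lemma buildC5 {V : Type*} (G : SimpleGraph V) (v a b c d : V)
    (e01 : G.Adj v a) (e12 : G.Adj a b) (e23 : G.Adj b c) (e34 : G.Adj c d) (e40 : G.Adj d v)
    (n02 : ¬G.Adj v b) (n03 : ¬G.Adj v c) (n13 : ¬G.Adj a c) (n14 : ¬G.Adj a d)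
    (n24 : ¬G.Adj b d)
    (m02 : v ≠ b) (m03 : v ≠ c) (m13 : a ≠ c) (m14 : a ≠ d) (m24 : b ≠ d) :
    HasInducedCycle G 5 := by
  have m01 : v ≠ a := e01.ne
  have m12 : a ≠ b := e12.ne
  have m23 : b ≠ c := e23.ne
  have m34 : c ≠ d := e34.ne
  have m04 : v ≠ d := e40.ne'
  have m10 := m01.symm; have m20 := m02.symm; have m30 := m03.symm; have m40 := m04.symm
  have m21 := m12.symm; have m31 := m13.symm; have m41 := m14.symm
  have m32 := m23.symm; have m42 := m24.symm; have m43 := m34.symm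
  refine ⟨![v, a, b, c, d], ?_, ?_⟩
  · intro x y
    fin_cases x <;> fin_cases y <;> simp_all
  · intro x y
    have nvv : ¬ G.Adj v v := G.loopless.irrefl v
    have naa : ¬ G.Adj a a := G.loopless.irrefl a
    have nbb : ¬ G.Adj b b := G.loopless.irrefl b
    have ncc : ¬ G.Adj c c := G.loopless.irrefl c
    have ndd : ¬ G.Adj d d := G.loopless.irrefl d
    have n02' : ¬G.Adj b v := fun h => n02 h.symm
    have n03' : ¬G.Adj c v := fun h => n03 h.symm
    have n13' : ¬G.Adj c a := fun h => n13 h.symm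
    have n14' : ¬G.Adj d a := fun h => n14 h.symm
    have n24' : ¬G.Adj d b := fun h => n24 h.symm
    fin_cases x <;> fin_cases y <;>
      simp only [Matrix.cons_val_zero, Matrix.cons_val_one, Matrix.head_cons,
        Matrix.cons_val_two, Matrix.tail_cons, Matrix.cons_val_three,
        Matrix.cons_val_four, Fin.isValue] <;>
      first | (refine iff_of_true ?_ (by decide); first | exact e01 | exact e12 | exact e23 | exact e34 | exact e40 | exact e01.symm | exact e12.symm | exact e23.symm | exact e34.symm | exact e40.symm) | (refine iff_of_false ?_ (by decide); assumption)

/-- If G is connected, gap-free, C5-free and diamond-free with clique number 3, then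
either G is isomorphic to the complement of the 6-cycle or the complement of G is chordal. -/
theorem stmt_9 {V : Type*} [Fintype V] (G : SimpleGraph V)
    (hconn : G.Connected) (hgap : IsGapFree G) (hC5 : ¬ HasInducedCycle G 5)
    (hdia : IsDiamondFree G) (hw : cliqueNum' G = 3) :
    Nonempty (G ≃g (cycG 6)ᶜ) ∨ IsChordal Gᶜ := by
  classical
  by_cases hch : IsChordal Gᶜ
  · exact Or.inr hch
  rw [IsChordal] at hch
  push_neg at hch
  obtain ⟨n, hn4, f, hinj, hiff⟩ := hch
  have hE : ∀ i j, (cycG n).Adj i j → ¬ G.Adj (f i) (f j) :=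
    fun i j h => ((SimpleGraph.compl_adj _ _ _).mp ((hiff i j).mpr h)).2
  have hN : ∀ i j, i ≠ j → ¬ (cycG n).Adj i j → G.Adj (f i) (f j) :=
    fun i j hne h => (adj_iff_not_compl G (hinj.ne hne)).mpr (fun hc => h ((hiff i j).mp hc))
  have hcase : n = 4 ∨ n = 5 ∨ n = 6 ∨ n = 7 ∨ 8 ≤ n := by omega
  rcases hcase with rfl | rfl | rfl | rfl | h8
  · -- n = 4 : gives an induced 2K₂, contradicting gap-freeness
    exact absurd ⟨f 0, f 2, f 1, f 3, hinj.ne (by decide), hinj.ne (by decide),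
      hinj.ne (by decide), hinj.ne (by decide), hinj.ne (by decide), hinj.ne (by decide),
      hN 0 2 (by decide) (by decide), hN 1 3 (by decide) (by decide),
      hE 0 1 (by decide), hE 0 3 (by decide), hE 2 1 (by decide), hE 2 3 (by decide)⟩ hgap
  · -- n = 5 : C₅ is self-complementary, contradicting C₅-freeness
    have hσ : Function.Injective (fun t : Fin 5 => 2 * t) := by decide
    refine absurd ⟨fun t => f (2 * t), hinj.comp hσ, fun i j => ?_⟩ hC5
    by_cases hij : i = j
    · subst hij
      exact iff_of_false (G.loopless.irrefl _) ((cycG 5).loopless.irrefl _)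
    · rw [adj_iff_not_compl G (hinj.ne (fun h => hij (hσ h))), hiff]
      exact (show ∀ i j : Fin 5, i ≠ j →
        (¬(cycG 5).Adj (2 * i) (2 * j) ↔ (cycG 5).Adj i j) by decide) i j hij
  · -- n = 6 : G contains an induced prism; show G is exactly the prism
    have hGP : ∀ i j, G.Adj (f i) (f j) ↔ P6 i j = true := by
      intro i j
      by_cases hij : i = j
      · subst hij
        exact iff_of_false (G.loopless.irrefl _) (by simp [P6])
      · rw [adj_iff_not_compl G (hinj.ne hij), hiff]
        simp only [P6, decide_eq_true_eq]
        tauto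
    have hkey : ∀ v, v ∉ Set.range f → ∀ i, ¬ G.Adj v (f i) := by
      intro v hv
      by_contra hcon
      push_neg at hcon
      obtain ⟨i0, hi0⟩ := hcon
      have hvne : ∀ t, v ≠ f t := fun t h => hv ⟨t, h.symm⟩
      set b : Fin 6 → Bool := fun i => decide (G.Adj v (f i)) with hbdef
      have hb : ∀ i, b i = true ↔ G.Adj v (f i) := fun i => by simp [hbdef]
      have hbne : ∀ {i j}, b i = true → b j = false → i ≠ j := by
        intro i j h1 h2 h
        subst h; rw [h1] at h2; exact Bool.noConfusion h2
      have hbF : ∀ {i}, b i = false → ¬ G.Adj v (f i) := by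
        intro i h hA
        rw [(hb i).mpr hA] at h; exact Bool.noConfusion h
      have hPF : ∀ {i j}, P6 i j = false → ¬ G.Adj (f i) (f j) := by
        intro i j h hA
        rw [(hGP i j).mp hA] at h; exact Bool.noConfusion h
      rcases core6 b ⟨i0, (hb i0).mpr hi0⟩ with
          ⟨i, j, k, hbi, hbj, hbk, hij, hik, hjk⟩ |
          ⟨i, j, k, hbi, hbj, hbk, hij, hik, hjk⟩ |
          ⟨i, j, k, hbi, hbj, hbk, hjk, hij, hik⟩ |
          ⟨i, j, k, l, hil, hbi, hbl, hbj, hbk, hPij, hPjk, hPkl, hPik, hPil, hPjl⟩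
      · -- K₄ on v, f i, f j, f k
        exact cliqueNum_noK4 G hw ((hb i).mp hbi) ((hb j).mp hbj) ((hb k).mp hbk)
          ((hGP i j).mpr hij) ((hGP i k).mpr hik) ((hGP j k).mpr hjk)
      · -- diamond on (f i, v, f j, f k)
        have eij := (hGP i j).mpr hij
        have eik := (hGP i k).mpr hik
        have ejk := (hGP j k).mpr hjk
        exact hdia ⟨f i, v, f j, f k, (hvne i).symm, eij.ne, eik.ne, hvne j, hvne k, ejk.ne,
          ((hb i).mp hbi).symm, eij, (hb j).mp hbj, eik, ejk, hbF hbk⟩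
      · -- 2K₂ on (v, f i) and (f j, f k)
        have ejk := (hGP j k).mpr hjk
        exact hgap ⟨v, f i, f j, f k, hvne i, hvne j, hvne k,
          hinj.ne (hbne hbi hbj), hinj.ne (hbne hbi hbk), ejk.ne,
          (hb i).mp hbi, ejk, hbF hbj, hbF hbk, hPF hij, hPF hik⟩
      · -- induced C₅ on v, f i, f j, f k, f l
        exact hC5 (buildC5 G v (f i) (f j) (f k) (f l)
          ((hb i).mp hbi) ((hGP i j).mpr hPij) ((hGP j k).mpr hPjk) ((hGP k l).mpr hPkl)
          (((hb l).mp hbl).symm)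
          (hbF hbj) (hbF hbk) (hPF hPik) (hPF hPil) (hPF hPjl)
          (hvne j) (hvne k) (hinj.ne (hbne hbi hbk)) (hinj.ne hil)
          (fun h => (hbne hbl hbj) (hinj h).symm))
    have hall : ∀ x : V, x ∈ Set.range f := by
      by_contra hcon
      push_neg at hcon
      obtain ⟨x, hx⟩ := hcon
      obtain ⟨w⟩ := hconn.preconnected x (f 0)
      obtain ⟨v, p, hv, hp, hadj⟩ := walk_cross (Set.range f) w hx ⟨0, rfl⟩
      obtain ⟨i, rfl⟩ := hp
      exact hkey v hv i hadj
    have hbij : Function.Bijective f := ⟨hinj, fun x => hall x⟩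
    refine Or.inl ⟨SimpleGraph.Iso.symm ⟨Equiv.ofBijective f hbij, ?_⟩⟩
    intro i j
    show G.Adj (f i) (f j) ↔ (cycG 6)ᶜ.Adj i j
    rw [hGP, SimpleGraph.compl_adj]
    simp [P6]
  · -- n = 7 : gives an induced diamond
    exact absurd ⟨f 0, f 2, f 5, f 3, hinj.ne (by decide), hinj.ne (by decide),
      hinj.ne (by decide), hinj.ne (by decide), hinj.ne (by decide), hinj.ne (by decide),
      hN 0 2 (by decide) (by decide), hN 0 5 (by decide) (by decide),
      hN 2 5 (by decide) (by decide), hN 0 3 (by decide) (by decide),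
      hN 5 3 (by decide) (by decide), hE 2 3 (by decide)⟩ hdia
  · -- n ≥ 8 : gives a K₄
    have key : ∀ (a b : ℕ) (ha : a < n) (hb : b < n), a + 1 < n → b + 1 < n → a ≠ b →
        b ≠ a + 1 → a ≠ b + 1 → G.Adj (f ⟨a, ha⟩) (f ⟨b, hb⟩) := by
      intro a b ha hb h1 h2 h3 h4 h5
      refine hN _ _ (by simp [Fin.ext_iff, h3]) ?_
      intro hadj
      rw [cycG, SimpleGraph.fromRel_adj] at hadj
      obtain ⟨-, h | h⟩ := hadj
      · rw [Nat.mod_eq_of_lt h1] at h; exact h4 h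
      · rw [Nat.mod_eq_of_lt h2] at h; exact h5 h
    exact absurd (cliqueNum_noK4 G hw
      (key 0 2 (by omega) (by omega) (by omega) (by omega) (by omega) (by omega) (by omega))
      (key 0 4 (by omega) (by omega) (by omega) (by omega) (by omega) (by omega) (by omega))
      (key 0 6 (by omega) (by omega) (by omega) (by omega) (by omega) (by omega) (by omega))
      (key 2 4 (by omega) (by omega) (by omega) (by omega) (by omega) (by omega) (by omega))
      (key 2 6 (by omega) (by omega) (by omega) (by omega) (by omega) (by omega) (by omega))
      (key 4 6 (by omega) (by omega) (by omega) (by omega) (by omega) (by omega) (by omega)))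
      id
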